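/- Let D(T) = \prod_{i≥0}(1 - z_i T) with z_i in the ring of integers of a complete algebraically closed p-adic field, such that ord_p z_i → ∞ (so D is p-adically entire). For each rational s ≥ 0, let d_s = #\{i : ord_p z_i = s\}, assumed finite. Suppose the Newton polygon of D satisfies the quadratic lower bound: the valuation of the n-th coefficient of D is at least n^2/(2c) - e·n for constants c > 0, e ≥ 0. Then for every real A ≥ 1, (1/A) \sum_{0 ≤ s ≤ A} d_s ≤ c + c·e/A. In particular the average number of reciprocal zeros with slope in [0, A] is uniformly bounded. -/

import Mathlib

/-- Let `D(T) = ∏ᵢ (1 - zᵢT)` be a `p`-adically entire function with integral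
reciprocal zeros, encoded by the sequence `v i = ord_p zᵢ ≥ 0` of slopes, with only
finitely many slopes in any bounded range. Suppose the Newton polygon of `D`
satisfies the quadratic lower bound, i.e. (in the equivalent slope form, as in
Proposition 2.11) for all `A ≥ 1`,
`∑_{v i ≤ A} v i ≥ (1/c)(#{i : v i ≤ A})² - e·#{i : v i ≤ A}`
with `c > 0`, `e ≥ 0`. Then for all real `A ≥ 1`,
`(1/A) ∑_{0 ≤ s ≤ A} d_s ≤ c + c·e/A`, where `∑_{0 ≤ s ≤ A} d_s = #{i : v i ≤ A}`;
in particular the average number of reciprocal zeros of slope in `[0, A]` is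
uniformly bounded. -/
theorem average_slope_count_bound (v : ℕ → ℚ) (hv : ∀ i, 0 ≤ v i)
    (hfin : ∀ A : ℝ, {i : ℕ | (v i : ℝ) ≤ A}.Finite)
    (c e : ℝ) (hc : 0 < c) (he : 0 ≤ e)
    (hNP : ∀ A : ℝ, 1 ≤ A →
      (1 / c) * ((hfin A).toFinset.card : ℝ) ^ 2 - e * ((hfin A).toFinset.card : ℝ) ≤
        ∑ i ∈ (hfin A).toFinset, (v i : ℝ)) :
    ∀ A : ℝ, 1 ≤ A →
      (1 / A) * ((hfin A).toFinset.card : ℝ) ≤ c + c * e / A := by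
  intro A hA
  have hA0 : 0 < A := lt_of_lt_of_le one_pos hA
  set N : ℝ := ((hfin A).toFinset.card : ℝ) with hN
  have hN0 : 0 ≤ N := Nat.cast_nonneg _
  have hsum : ∑ i ∈ (hfin A).toFinset, (v i : ℝ) ≤ A * N := by
    calc ∑ i ∈ (hfin A).toFinset, (v i : ℝ)
        ≤ ∑ _i ∈ (hfin A).toFinset, A :=
          Finset.sum_le_sum fun i hi => by simpa using ((hfin A).mem_toFinset.mp hi)
      _ = A * N := by rw [Finset.sum_const, nsmul_eq_mul, hN]; ring
  have key : (1 / c) * N ^ 2 - e * N ≤ A * N := le_trans (hNP A hA) hsum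
  have hNle : N ≤ c * (A + e) := by
    rcases eq_or_lt_of_le hN0 with h | h
    · nlinarith
    · have hcc : c * (1 / c) = 1 := mul_one_div_cancel hc.ne'
      have key2 : N * N ≤ c * (A + e) * N := by
        have h2 := mul_le_mul_of_nonneg_left key hc.le
        nlinarith
      exact le_of_mul_le_mul_right key2 h
  rw [one_div, inv_mul_le_iff₀ hA0]
  have heq : A * (c + c * e / A) = c * (A + e) := by field_simp
  linarith
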